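/- For sufficiently large n, there exists a set P of 2^{2^{⌊n/2⌋}} points in the plane in general position and a 2-coloring χ' of the 3-element subsets of P such that no 2n points of P are in convex position with all their triples the same color under χ'. Consequently g(K³_n, K³_n) ≥ 2^{2^{cn}} for an absolute constant c > 0. -/

import Mathlib

/-- A finite planar point set is in general position if no three of its points are collinear. -/
def GenPos (S : Finset (ℝ × ℝ)) : Prop :=
  ∀ T ⊆ S, T.card = 3 → ¬ Collinear ℝ (T : Set (ℝ × ℝ))

/-- A finite planar point set is in convex position if no point lies in the
convex hull of the others. -/
def ConvexPos (S : Finset (ℝ × ℝ)) : Prop :=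
  ∀ p ∈ S, p ∉ convexHull ℝ ((S.erase p : Finset (ℝ × ℝ)) : Set (ℝ × ℝ))

/-- `GeomRamseyProp3 n q N` : every set of at least `N` points in general position in the
plane, with any `q`-coloring of its triples, contains `n` points in convex position all of
whose triples receive the same color; i.e. `g(K³_n; q) ≤ N`. -/
def GeomRamseyProp3 (n q N : ℕ) : Prop :=
  ∀ V : Finset (ℝ × ℝ), N ≤ V.card → GenPos V →
    ∀ χ : Finset (ℝ × ℝ) → Fin q,
      ∃ T ⊆ V, T.card = n ∧ ConvexPos T ∧
        ∃ c : Fin q, ∀ e ⊆ T, e.card = 3 → χ e = c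

open scoped symmDiff

namespace SU

noncomputable def X (s : Finset ℕ) : ℝ := ∑ i ∈ s, 100 ^ i
noncomputable def Y (s : Finset ℕ) : ℝ := ∑ i ∈ s, 300 ^ i
noncomputable def pt (s : Finset ℕ) : ℝ × ℝ := (X s, Y s)

def dl (s t : Finset ℕ) : ℕ := (s ∆ t).sup id

lemma dl_comm (s t : Finset ℕ) : dl s t = dl t s := by rw [dl, dl, symmDiff_comm]

lemma dl_mem {s t : Finset ℕ} (h : s ≠ t) : dl s t ∈ s ∆ t := by
  have hne : (s ∆ t).Nonempty := by
    rw [Finset.nonempty_iff_ne_empty]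
    intro he
    exact h ((symmDiff_eq_bot (a := s) (b := t)).mp he)
  obtain ⟨i, hi, hsup⟩ := Finset.exists_mem_eq_sup _ hne id
  rw [dl, hsup]; exact hi

lemma le_dl {s t : Finset ℕ} {i : ℕ} (h : i ∈ s ∆ t) : i ≤ dl s t := Finset.le_sup (f := id) h

lemma sum_pow_le {r : ℝ} (hr : 2 ≤ r) {s : Finset ℕ} {l : ℕ} (hs : ∀ i ∈ s, i < l) :
    ∑ i ∈ s, r ^ i ≤ (r ^ l - 1) / (r - 1) := by
  have h1 : (1:ℝ) < r := by linarith
  have hsub : s ⊆ Finset.range l := fun i hi => Finset.mem_range.mpr (hs i hi)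
  calc ∑ i ∈ s, r ^ i ≤ ∑ i ∈ Finset.range l, r ^ i := by
        apply Finset.sum_le_sum_of_subset_of_nonneg hsub
        intro i _ _; positivity
    _ = (r ^ l - 1) / (r - 1) := geom_sum_eq (by linarith) l

lemma sum_pow_nonneg {r : ℝ} (hr : 2 ≤ r) (s : Finset ℕ) : (0:ℝ) ≤ ∑ i ∈ s, r ^ i := by
  apply Finset.sum_nonneg; intro i _; positivity

/-- core difference bound -/
lemma diff_bounds {r : ℝ} (hr : 2 ≤ r) {s t : Finset ℕ} (hne : s ≠ t)
    (ht : dl s t ∈ t) :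
    r ^ dl s t * ((r-2)/(r-1)) ≤ (∑ i ∈ t, r ^ i) - ∑ i ∈ s, r ^ i ∧
    (∑ i ∈ t, r ^ i) - ∑ i ∈ s, r ^ i ≤ r ^ dl s t * (r/(r-1)) := by
  set l := dl s t with hl
  have hmem : l ∈ s ∆ t := dl_mem hne
  have hls : l ∉ s := by
    rcases Finset.mem_symmDiff.mp hmem with ⟨h1, h2⟩ | ⟨h1, h2⟩
    · exact absurd ht h2
    · exact h2
  have hlts : l ∈ t \ s := Finset.mem_sdiff.mpr ⟨ht, hls⟩
  have e1 : (∑ i ∈ t, r ^ i) - ∑ i ∈ s, r ^ i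
      = (∑ i ∈ t \ s, r ^ i) - ∑ i ∈ s \ t, r ^ i := by
    have h1 := Finset.sum_inter_add_sum_sdiff t s (fun i => r ^ i)
    have h2 := Finset.sum_inter_add_sum_sdiff s t (fun i => r ^ i)
    have : t ∩ s = s ∩ t := Finset.inter_comm t s
    rw [this] at h1
    linarith
  have e2 : ∑ i ∈ t \ s, r ^ i = (∑ i ∈ (t \ s).erase l, r ^ i) + r ^ l :=
    (Finset.sum_erase_add _ _ hlts).symm
  have hbe : ∀ i ∈ (t \ s).erase l, i < l := by
    intro i hi
    have hine := Finset.ne_of_mem_erase hi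
    have hits : i ∈ t \ s := Finset.mem_of_mem_erase hi
    have : i ∈ s ∆ t := Finset.mem_symmDiff.mpr (Or.inr (Finset.mem_sdiff.mp hits |>.imp id id))
    exact lt_of_le_of_ne (le_dl this) hine
  have hbs : ∀ i ∈ s \ t, i < l := by
    intro i hi
    have his : i ∈ s ∆ t := Finset.mem_symmDiff.mpr (Or.inl (Finset.mem_sdiff.mp hi |>.imp id id))
    have : i ≠ l := by rintro rfl; exact hls (Finset.mem_sdiff.mp hi).1
    exact lt_of_le_of_ne (le_dl his) this
  have bA := sum_pow_le hr hbe
  have bA0 := sum_pow_nonneg hr ((t \ s).erase l)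
  have bB := sum_pow_le hr hbs
  have bB0 := sum_pow_nonneg hr (s \ t)
  have hp1 : (1:ℝ) ≤ r ^ l := one_le_pow₀ (by linarith : (1:ℝ) ≤ r)
  have hr1 : (0:ℝ) < r - 1 := by linarith
  have bA' : (∑ i ∈ (t \ s).erase l, r ^ i) * (r - 1) ≤ r ^ l - 1 := by
    rwa [← le_div_iff₀ hr1]
  have bB' : (∑ i ∈ s \ t, r ^ i) * (r - 1) ≤ r ^ l - 1 := by
    rwa [← le_div_iff₀ hr1]
  constructor
  · rw [e1, e2, ← mul_div_assoc, div_le_iff₀ hr1]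
    nlinarith
  · rw [e1, e2, ← mul_div_assoc, le_div_iff₀ hr1]
    nlinarith

lemma X_diff_bounds {s t : Finset ℕ} (hne : s ≠ t) (ht : dl s t ∈ t) :
    (100:ℝ) ^ dl s t * (98/99) ≤ X t - X s ∧ X t - X s ≤ (100:ℝ) ^ dl s t * (100/99) := by
  have h := diff_bounds (r := 100) (by norm_num) hne ht
  rw [X, X]
  constructor
  · have := h.1; norm_num at this ⊢; linarith
  · have := h.2; norm_num at this ⊢; linarith

lemma Y_diff_bounds {s t : Finset ℕ} (hne : s ≠ t) (ht : dl s t ∈ t) :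
    (300:ℝ) ^ dl s t * (298/299) ≤ Y t - Y s ∧ Y t - Y s ≤ (300:ℝ) ^ dl s t * (300/299) := by
  have h := diff_bounds (r := 300) (by norm_num) hne ht
  rw [Y, Y]
  constructor
  · have := h.1; norm_num at this ⊢; linarith
  · have := h.2; norm_num at this ⊢; linarith

lemma X_lt_of_side {s t : Finset ℕ} (hne : s ≠ t) (ht : dl s t ∈ t) : X s < X t := by
  have h := (X_diff_bounds hne ht).1
  have : (0:ℝ) < (100:ℝ) ^ dl s t * (98/99) := by positivity
  linarith

lemma side_of_X_lt {s t : Finset ℕ} (hne : s ≠ t) (hX : X s < X t) : dl s t ∈ t := by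
  rcases Finset.mem_symmDiff.mp (dl_mem hne) with ⟨h1, _⟩ | ⟨h1, _⟩
  · exfalso
    have : X t < X s := by
      have h2 : dl t s ∈ s := by rwa [dl_comm]
      exact X_lt_of_side (Ne.symm hne) h2
    linarith
  · exact h1

lemma X_injOn {s t : Finset ℕ} (h : X s = X t) : s = t := by
  by_contra hne
  rcases Finset.mem_symmDiff.mp (dl_mem hne) with ⟨h1, _⟩ | ⟨h1, _⟩
  · have h2 : dl t s ∈ s := by rwa [dl_comm]
    have := X_lt_of_side (Ne.symm hne) h2; linarith
  · have := X_lt_of_side hne h1; linarith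

noncomputable def slope (p q : ℝ × ℝ) : ℝ := (q.2 - p.2) / (q.1 - p.1)

lemma slope_band {s t : Finset ℕ} (hne : s ≠ t) (hX : X s < X t) :
    (49/50:ℝ) * 3 ^ dl s t ≤ slope (pt s) (pt t) ∧
      slope (pt s) (pt t) ≤ (51/50:ℝ) * 3 ^ dl s t := by
  have ht := side_of_X_lt hne hX
  obtain ⟨hX1, hX2⟩ := X_diff_bounds hne ht
  obtain ⟨hY1, hY2⟩ := Y_diff_bounds hne ht
  have h300 : (300:ℝ) ^ dl s t = 3 ^ dl s t * 100 ^ dl s t := by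
    rw [← mul_pow]; norm_num
  have hXpos : (0:ℝ) < X t - X s := by
    have : (0:ℝ) < (100:ℝ) ^ dl s t * (98/99) := by positivity
    linarith
  have h3pos : (0:ℝ) < (3:ℝ) ^ dl s t := by positivity
  have h100pos : (0:ℝ) < (100:ℝ) ^ dl s t := by positivity
  have hs : slope (pt s) (pt t) = (Y t - Y s) / (X t - X s) := rfl
  rw [hs]
  constructor
  · rw [le_div_iff₀ hXpos]
    nlinarith
  · rw [div_le_iff₀ hXpos]
    nlinarith

lemma slope_lt_of_dl_lt {s t u v : Finset ℕ} (hst : s ≠ t) (huv : u ≠ v)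
    (hX1 : X s < X t) (hX2 : X u < X v) (hd : dl s t < dl u v) :
    slope (pt s) (pt t) < slope (pt u) (pt v) := by
  obtain ⟨_, b2⟩ := slope_band hst hX1
  obtain ⟨b3, _⟩ := slope_band huv hX2
  have h3 : (3:ℝ) ^ (dl s t + 1) ≤ 3 ^ dl u v := by
    apply pow_le_pow_right₀ (by norm_num) hd
  have h3pos : (0:ℝ) < (3:ℝ) ^ dl s t := by positivity
  rw [pow_succ] at h3
  nlinarith

lemma dl_ne_middle {s t u : Finset ℕ} (h1 : X s < X t) (h2 : X t < X u) :
    dl s t ≠ dl t u := by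
  have hst : s ≠ t := fun h => by subst h; exact lt_irrefl _ h1
  have htu : t ≠ u := fun h => by subst h; exact lt_irrefl _ h2
  intro he
  have hm1 : dl s t ∈ t := side_of_X_lt hst h1
  have hm2 : dl t u ∈ u := side_of_X_lt htu h2
  rcases Finset.mem_symmDiff.mp (dl_mem htu) with ⟨_, hnu⟩ | ⟨_, hnt⟩
  · exact hnu hm2
  · rw [← he] at hnt; exact hnt hm1

lemma dl_trans {s t u : Finset ℕ} (h1 : X s < X t) (h2 : X t < X u) :
    dl s u = max (dl s t) (dl t u) := by
  have hst : s ≠ t := fun h => by subst h; exact lt_irrefl _ h1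
  have htu : t ≠ u := fun h => by subst h; exact lt_irrefl _ h2
  have hsu : s ≠ u := fun h => by subst h; exact lt_irrefl _ (h1.trans h2)
  have hboundir : ∀ i ∈ s ∆ u, i ≤ max (dl s t) (dl t u) := by
    intro i hi
    have : i ∈ s ∆ t ⊔ t ∆ u := symmDiff_triangle s t u hi
    rcases Finset.mem_union.mp this with h | h
    · exact le_max_of_le_left (le_dl h)
    · exact le_max_of_le_right (le_dl h)
  rcases lt_trichotomy (dl s t) (dl t u) with hlt | heq | hgt
  · rw [max_eq_right hlt.le]
    set l := dl t u
    have hlu : l ∈ u := side_of_X_lt htu h2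
    have hlnt : l ∉ t := by
      rcases Finset.mem_symmDiff.mp (dl_mem htu) with ⟨_, hc⟩ | ⟨_, hc⟩
      · exact absurd hlu hc
      · exact hc
    have hlns : l ∉ s := by
      intro hls
      have : l ∈ s ∆ t := Finset.mem_symmDiff.mpr (Or.inl ⟨hls, hlnt⟩)
      exact absurd (le_dl this) (not_le.mpr hlt)
    have hlm : l ∈ s ∆ u := Finset.mem_symmDiff.mpr (Or.inr ⟨hlu, hlns⟩)
    apply le_antisymm
    · apply Finset.sup_le; intro i hi
      have := hboundir i hi; rw [max_eq_right hlt.le] at this; exact this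
    · exact le_dl hlm
  · exact absurd heq (dl_ne_middle h1 h2)
  · rw [max_eq_left hgt.le]
    set l := dl s t
    have hlt' : l ∈ t := side_of_X_lt hst h1
    have hlns : l ∉ s := by
      rcases Finset.mem_symmDiff.mp (dl_mem hst) with ⟨_, hc⟩ | ⟨_, hc⟩
      · exact absurd hlt' hc
      · exact hc
    have hlu : l ∈ u := by
      by_contra hlnu
      have : l ∈ t ∆ u := Finset.mem_symmDiff.mpr (Or.inl ⟨hlt', hlnu⟩)
      exact absurd (le_dl this) (not_le.mpr hgt)
    have hlm : l ∈ s ∆ u := Finset.mem_symmDiff.mpr (Or.inr ⟨hlu, hlns⟩)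
    apply le_antisymm
    · apply Finset.sup_le; intro i hi
      have := hboundir i hi; rw [max_eq_left hgt.le] at this; exact this
    · exact le_dl hlm

section chain

variable {u : ℕ → Finset ℕ} {t : ℕ}
  (hX : ∀ a b, a < b → b < t → X (u a) < X (u b))

include hX

lemma D_dec (hdec : ∀ a, a + 2 < t → dl (u (a+1)) (u (a+2)) < dl (u a) (u (a+1))) :
    ∀ a b, a < b → b + 1 < t → dl (u b) (u (b+1)) < dl (u a) (u (a+1)) := by
  intro a b hab hb
  obtain ⟨d, rfl⟩ : ∃ d, b = a + 1 + d := ⟨b - (a+1), by omega⟩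
  clear hab
  induction d with
  | zero => exact hdec a (by omega)
  | succ d ih =>
      have h1 : dl (u (a+1+d+1)) (u (a+1+d+2)) < dl (u (a+1+d)) (u (a+1+d+1)) :=
        hdec (a+1+d) (by omega)
      have h2 := ih (by omega)
      have e : a + 1 + (d+1) = a + 1 + d + 1 := by omega
      rw [e]
      calc dl (u (a+1+d+1)) (u (a+1+d+1+1)) < dl (u (a+1+d)) (u (a+1+d+1)) := by
            convert h1 using 3 <;> omega
        _ < dl (u a) (u (a+1)) := h2

lemma D_inc (hinc : ∀ a, a + 2 < t → dl (u a) (u (a+1)) < dl (u (a+1)) (u (a+2))) :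
    ∀ a b, a < b → b + 1 < t → dl (u a) (u (a+1)) < dl (u b) (u (b+1)) := by
  intro a b hab hb
  obtain ⟨d, rfl⟩ : ∃ d, b = a + 1 + d := ⟨b - (a+1), by omega⟩
  clear hab
  induction d with
  | zero => exact hinc a (by omega)
  | succ d ih =>
      have h1 : dl (u (a+1+d)) (u (a+1+d+1)) < dl (u (a+1+d+1)) (u (a+1+d+2)) :=
        hinc (a+1+d) (by omega)
      have h2 := ih (by omega)
      have e : a + 1 + (d+1) = a + 1 + d + 1 := by omega
      rw [e]
      calc dl (u a) (u (a+1)) < dl (u (a+1+d)) (u (a+1+d+1)) := h2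
        _ < dl (u (a+1+d+1)) (u (a+1+d+1+1)) := by convert h1 using 3 <;> omega

lemma window_dec (hdec : ∀ a, a + 2 < t → dl (u (a+1)) (u (a+2)) < dl (u a) (u (a+1))) :
    ∀ a b, a < b → b < t → dl (u a) (u b) = dl (u a) (u (a+1)) := by
  intro a b hab hb
  obtain ⟨d, rfl⟩ : ∃ d, b = a + 1 + d := ⟨b - (a+1), by omega⟩
  clear hab
  induction d with
  | zero => rfl
  | succ d ih =>
      have hb' : a + 1 + d < t := by omega
      have e : a + 1 + (d+1) = a + 1 + d + 1 := by omega
      rw [e]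
      have htr : dl (u a) (u (a+1+d+1))
          = max (dl (u a) (u (a+1+d))) (dl (u (a+1+d)) (u (a+1+d+1))) := by
        apply dl_trans (hX a (a+1+d) (by omega) (by omega))
          (hX (a+1+d) (a+1+d+1) (by omega) (by omega))
      rw [htr, ih (by omega)]
      rcases Nat.eq_or_lt_of_le (Nat.le_refl a) with _ | _
      all_goals {
        have hlt : dl (u (a+1+d)) (u (a+1+d+1)) < dl (u a) (u (a+1)) := by
          rcases Nat.eq_zero_or_pos d with rfl | hd
          · exact hdec a (by omega)
          · exact D_dec hX hdec a (a+1+d) (by omega) (by omega)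
        exact max_eq_left hlt.le
      }

lemma window_inc (hinc : ∀ a, a + 2 < t → dl (u a) (u (a+1)) < dl (u (a+1)) (u (a+2))) :
    ∀ a d, a + 1 + d < t → dl (u a) (u (a+1+d)) = dl (u (a+d)) (u (a+d+1)) := by
  intro a d
  induction d generalizing a with
  | zero => intro _; norm_num
  | succ d ih =>
      intro hb
      have htr : dl (u a) (u (a+1+(d+1)))
          = max (dl (u a) (u (a+1))) (dl (u (a+1)) (u (a+1+(d+1)))) := by
        apply dl_trans (hX a (a+1) (by omega) (by omega))
          (hX (a+1) (a+1+(d+1)) (by omega) (by omega))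
      have e2 : a + 1 + (d + 1) = (a+1) + 1 + d := by omega
      have ih' : dl (u (a+1)) (u ((a+1)+1+d)) = dl (u ((a+1)+d)) (u ((a+1)+d+1)) :=
        ih (a+1) (by omega)
      rw [htr]
      rw [show a+1+(d+1) = (a+1)+1+d by omega, ih']
      have hlt : dl (u a) (u (a+1)) < dl (u ((a+1)+d)) (u ((a+1)+d+1)) := by
        have := D_inc hX hinc a ((a+1)+d) (by omega) (by omega)
        convert this using 3 <;> omega
      rw [max_eq_right hlt.le]
      congr 2 <;> omega

end chain

noncomputable def lineY (a b : ℝ × ℝ) (x : ℝ) : ℝ :=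
  a.2 + (x - a.1) * (b.2 - a.2) / (b.1 - a.1)

lemma seg_mem {a b : ℝ × ℝ} {x : ℝ} (hab : a.1 < b.1) (h1 : a.1 ≤ x) (h2 : x ≤ b.1) :
    (x, lineY a b x) ∈ segment ℝ a b := by
  have hd : (0:ℝ) < b.1 - a.1 := by linarith
  refine ⟨1 - (x - a.1)/(b.1 - a.1), (x - a.1)/(b.1 - a.1), ?_, ?_, by ring, ?_⟩
  · have : (x - a.1)/(b.1 - a.1) ≤ 1 := by
      rw [div_le_one hd]; linarith
    linarith
  · exact div_nonneg (by linarith) (by linarith)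
  · have hd' : b.1 - a.1 ≠ 0 := ne_of_gt hd
    apply Prod.ext
    · simp only [Prod.smul_mk, Prod.mk_add_mk, smul_eq_mul, Prod.fst_add, Prod.smul_fst]
      field_simp
      ring
    · simp only [Prod.snd_add, Prod.smul_snd, smul_eq_mul, lineY]
      field_simp
      ring

lemma vert_mem {p q : ℝ × ℝ} {y : ℝ} (hx : p.1 = q.1) (h1 : p.2 ≤ y) (h2 : y ≤ q.2) :
    (p.1, y) ∈ segment ℝ p q := by
  rcases eq_or_lt_of_le (h1.trans h2) with he | hlt
  · have : y = p.2 := le_antisymm (by rw [he]; exact h2) h1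
    rw [this]
    exact left_mem_segment ℝ p q
  · have hd : (0:ℝ) < q.2 - p.2 := by linarith
    refine ⟨1 - (y - p.2)/(q.2 - p.2), (y - p.2)/(q.2 - p.2), ?_, ?_, by ring, ?_⟩
    · have : (y - p.2)/(q.2 - p.2) ≤ 1 := by
        rw [div_le_one hd]; linarith
      linarith
    · exact div_nonneg (by linarith) (by linarith)
    · have hd' : q.2 - p.2 ≠ 0 := ne_of_gt hd
      apply Prod.ext
      · simp only [Prod.fst_add, Prod.smul_fst, smul_eq_mul]
        rw [← hx]; ring
      · simp only [Prod.snd_add, Prod.smul_snd, smul_eq_mul]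
        field_simp
        ring

lemma collinear_of_lineY {a b c : ℝ × ℝ} (hac : a.1 < c.1) (hb : b.2 = lineY a c b.1) :
    Collinear ℝ ({a, b, c} : Set (ℝ × ℝ)) := by
  have hd : c.1 - a.1 ≠ 0 := by intro h; exact absurd h (by intro h'; linarith)
  rw [collinear_iff_of_mem (Set.mem_insert a {b, c})]
  refine ⟨c - a, ?_⟩
  intro p hp
  rcases hp with rfl | rfl | rfl
  · exact ⟨0, by simp⟩
  · refine ⟨(p.1 - a.1)/(c.1 - a.1), ?_⟩
    have : p = ((p.1 - a.1)/(c.1 - a.1)) • (c - a) + a := by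
      apply Prod.ext
      · simp only [Prod.fst_add, Prod.smul_fst, Prod.fst_sub, smul_eq_mul]
        field_simp
        ring
      · simp only [Prod.snd_add, Prod.smul_snd, Prod.snd_sub, smul_eq_mul]
        rw [hb, lineY]
        field_simp
        ring
    simpa using this
  · refine ⟨1, ?_⟩
    have : p = (1:ℝ) • (p - a) + a := by simp
    simpa using this

lemma slope_eq_of_collinear {a b c : ℝ × ℝ} (h : Collinear ℝ ({a, b, c} : Set (ℝ × ℝ)))
    (h1 : a.1 < b.1) (h2 : b.1 < c.1) : slope a b = slope b c := by
  rw [collinear_iff_of_mem (Set.mem_insert a {b, c})] at h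
  obtain ⟨v, hv⟩ := h
  obtain ⟨ra, ha⟩ := hv a (by simp)
  obtain ⟨rb, hbb⟩ := hv b (by simp)
  obtain ⟨rc, hc⟩ := hv c (by simp)
  have hba : b - a = (rb - ra) • v := by
    rw [sub_smul]
    have : b - a = (rb • v +ᵥ a) - (ra • v +ᵥ a) := by rw [← ha, ← hbb]
    rw [this]
    simp [vadd_eq_add]
    try abel
  have hcb : c - b = (rc - rb) • v := by
    rw [sub_smul]
    have : c - b = (rc • v +ᵥ a) - (rb • v +ᵥ a) := by rw [← hbb, ← hc]
    rw [this]
    simp [vadd_eq_add]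
    try abel
  have hba1 : b.1 - a.1 = (rb - ra) * v.1 := by
    have := congrArg Prod.fst hba; simpa using this
  have hba2 : b.2 - a.2 = (rb - ra) * v.2 := by
    have := congrArg Prod.snd hba; simpa using this
  have hcb1 : c.1 - b.1 = (rc - rb) * v.1 := by
    have := congrArg Prod.fst hcb; simpa using this
  have hcb2 : c.2 - b.2 = (rc - rb) * v.2 := by
    have := congrArg Prod.snd hcb; simpa using this
  have hrba : rb - ra ≠ 0 := by
    intro h0; rw [h0, zero_mul] at hba1; linarith
  have hrcb : rc - rb ≠ 0 := by
    intro h0; rw [h0, zero_mul] at hcb1; linarith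
  rw [slope, slope, hba1, hba2, hcb1, hcb2, mul_div_mul_left _ _ hrba,
    mul_div_mul_left _ _ hrcb]

lemma slope_lt_iff_below {a b c : ℝ × ℝ} (h1 : a.1 < b.1) (h2 : b.1 < c.1) :
    slope a b < slope b c ↔ b.2 < lineY a c b.1 := by
  have d1 : (0:ℝ) < b.1 - a.1 := by linarith
  have d2 : (0:ℝ) < c.1 - b.1 := by linarith
  have d3 : (0:ℝ) < c.1 - a.1 := by linarith
  rw [slope, slope, div_lt_div_iff₀ d1 d2, lineY, ← sub_lt_iff_lt_add', mul_div_assoc,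
    ← mul_div_assoc, lt_div_iff₀ d3]
  constructor <;> intro h <;> nlinarith

lemma slope_eq_iff_on {a b c : ℝ × ℝ} (h1 : a.1 < b.1) (h2 : b.1 < c.1) :
    slope a b = slope b c ↔ b.2 = lineY a c b.1 := by
  have d1 : (0:ℝ) < b.1 - a.1 := by linarith
  have d2 : (0:ℝ) < c.1 - b.1 := by linarith
  have d3 : (0:ℝ) < c.1 - a.1 := by linarith
  rw [slope, slope, div_eq_div_iff d1.ne' d2.ne', lineY, ← sub_eq_iff_eq_add',
    eq_div_iff d3.ne']
  constructor <;> intro h <;> linear_combination h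

lemma slope_gt_iff_above {a b c : ℝ × ℝ} (h1 : a.1 < b.1) (h2 : b.1 < c.1) :
    slope b c < slope a b ↔ lineY a c b.1 < b.2 := by
  constructor
  · intro h
    rcases lt_trichotomy (lineY a c b.1) b.2 with h' | h' | h'
    · exact h'
    · have := (slope_eq_iff_on h1 h2).mpr h'.symm; linarith
    · have := (slope_lt_iff_below h1 h2).mpr h'; linarith
  · intro h
    rcases lt_trichotomy (slope b c) (slope a b) with h' | h' | h'
    · exact h'
    · have := (slope_eq_iff_on h1 h2).mp h'.symm; linarith
    · have := (slope_lt_iff_below h1 h2).mp h'; linarith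

lemma pt_inj {s t : Finset ℕ} (h : pt s = pt t) : s = t :=
  X_injOn (congrArg Prod.fst h)

noncomputable def inv (m : ℕ) (p : ℝ × ℝ) : Finset ℕ :=
  if h : ∃ s, s ⊆ Finset.range m ∧ pt s = p then h.choose else ∅

lemma inv_spec {m : ℕ} {p : ℝ × ℝ} (hp : ∃ s, s ⊆ Finset.range m ∧ pt s = p) :
    inv m p ⊆ Finset.range m ∧ pt (inv m p) = p := by
  rw [inv, dif_pos hp]
  exact hp.choose_spec

lemma inv_pt {m : ℕ} {s : Finset ℕ} (hs : s ⊆ Finset.range m) : inv m (pt s) = s := by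
  have h : ∃ u, u ⊆ Finset.range m ∧ pt u = pt s := ⟨s, hs, rfl⟩
  exact pt_inj (inv_spec h).2

noncomputable def Pset (m : ℕ) : Finset (ℝ × ℝ) := (Finset.range m).powerset.image pt

lemma mem_Pset {m : ℕ} {p : ℝ × ℝ} : p ∈ Pset m ↔ ∃ s, s ⊆ Finset.range m ∧ pt s = p := by
  simp [Pset, Finset.mem_image, Finset.mem_powerset]

lemma card_Pset (m : ℕ) : (Pset m).card = 2 ^ m := by
  rw [Pset, Finset.card_image_of_injOn (fun s _ t _ h => pt_inj h), Finset.card_powerset,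
    Finset.card_range]

lemma not_collinear_sorted {s t u : Finset ℕ} (h1 : X s < X t) (h2 : X t < X u) :
    ¬ Collinear ℝ ({pt s, pt t, pt u} : Set (ℝ × ℝ)) := by
  intro hcol
  have hx1 : (pt s).1 < (pt t).1 := h1
  have hx2 : (pt t).1 < (pt u).1 := h2
  have hsl := slope_eq_of_collinear hcol hx1 hx2
  have hst : s ≠ t := fun h => by subst h; exact lt_irrefl _ h1
  have htu : t ≠ u := fun h => by subst h; exact lt_irrefl _ h2
  rcases lt_trichotomy (dl s t) (dl t u) with hd | hd | hd
  · have := slope_lt_of_dl_lt hst htu h1 h2 hd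
    linarith [this]
  · exact dl_ne_middle h1 h2 hd
  · have := slope_lt_of_dl_lt htu hst h2 h1 hd
    linarith [this]

lemma not_collinear_three {s t u : Finset ℕ} (hst : X s ≠ X t) (hsu : X s ≠ X u)
    (htu : X t ≠ X u) : ¬ Collinear ℝ ({pt s, pt t, pt u} : Set (ℝ × ℝ)) := by
  have perm : ∀ (p q r : Finset ℕ), ({pt p, pt q, pt r} : Set (ℝ × ℝ)) = {pt s, pt t, pt u} →
      X p < X q → X q < X r → ¬ Collinear ℝ ({pt s, pt t, pt u} : Set (ℝ × ℝ)) := by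
    intro p q r he hpq hqr hc
    rw [← he] at hc
    exact not_collinear_sorted hpq hqr hc
  rcases lt_trichotomy (X s) (X t) with h1 | h1 | h1
  · rcases lt_trichotomy (X t) (X u) with h2 | h2 | h2
    · exact perm s t u rfl h1 h2
    · exact absurd h2 htu
    · rcases lt_trichotomy (X s) (X u) with h3 | h3 | h3
      · exact perm s u t (by ext w; simp; tauto) h3 h2
      · exact absurd h3 hsu
      · exact perm u s t (by ext w; simp; tauto) h3 h1
  · exact absurd h1 hst
  · rcases lt_trichotomy (X s) (X u) with h2 | h2 | h2
    · exact perm t s u (by ext w; simp; tauto) h1 h2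
    · exact absurd h2 hsu
    · rcases lt_trichotomy (X t) (X u) with h3 | h3 | h3
      · exact perm t u s (by ext w; simp; tauto) h3 h2
      · exact absurd h3 htu
      · exact perm u t s (by ext w; simp; tauto) h3 h1

lemma genPos_Pset (m : ℕ) : GenPos (Pset m) := by
  intro T hT h3
  obtain ⟨a, b, c, hab, hac, hbc, rfl⟩ := Finset.card_eq_three.mp h3
  have ha : a ∈ Pset m := hT (by simp)
  have hb : b ∈ Pset m := hT (by simp)
  have hc : c ∈ Pset m := hT (by simp)
  obtain ⟨sa, hsa, rfl⟩ := mem_Pset.mp ha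
  obtain ⟨sb, hsb, rfl⟩ := mem_Pset.mp hb
  obtain ⟨sc, hsc, rfl⟩ := mem_Pset.mp hc
  have hX1 : X sa ≠ X sb := fun h => hab (by rw [pt, pt, X_injOn h])
  have hX2 : X sa ≠ X sc := fun h => hac (by rw [pt, pt, X_injOn h])
  have hX3 : X sb ≠ X sc := fun h => hbc (by rw [pt, pt, X_injOn h])
  have := not_collinear_three hX1 hX2 hX3
  intro hcol
  apply this
  convert hcol using 1
  simp

lemma sorted_triple_list {α : Type*} [LinearOrder α] {a b c : α} (h1 : a < b) (h2 : b < c) :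
    ({a, b, c} : Finset α).sort (· ≤ ·) = [a, b, c] := by
  have hvals : ({a, b, c} : Finset α).val = (⟦[a, b, c]⟧ : Multiset α) := by
    rw [Finset.insert_val_of_notMem (by simp [h1.ne, (h1.trans h2).ne]),
      Finset.insert_val_of_notMem (by simp [h2.ne]), Finset.singleton_val]
    rfl
  have hperm : (({a, b, c} : Finset α).sort (· ≤ ·)).Perm [a, b, c] := by
    have h3 := Finset.sort_perm_toList (s := ({a, b, c} : Finset α)) (r := (· ≤ ·))
    have h4 : ({a, b, c} : Finset α).toList.Perm [a, b, c] := by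
      rw [Finset.toList, hvals]
      exact Multiset.coe_eq_coe.mp (Multiset.coe_toList _)
    exact h3.trans h4
  apply List.Perm.eq_of_sortedLE (Finset.sortedLT_sort _).sortedLE ?_ hperm
  rw [List.sortedLE_iff_pairwise]
  simp [h1.le, h2.le, (h1.trans h2).le]

noncomputable def tc (m : ℕ) (g : Finset ℕ → Fin 2) : List (ℝ ×ₗ ℝ) → Fin 2
  | [a, b, c] => g {dl (inv m (ofLex a)) (inv m (ofLex b)), dl (inv m (ofLex b)) (inv m (ofLex c))}
  | _ => 0

noncomputable def chi (m : ℕ) (g : Finset ℕ → Fin 2) (e : Finset (ℝ × ℝ)) : Fin 2 :=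
  tc m g ((e.image (toLex : ℝ × ℝ → ℝ ×ₗ ℝ)).sort (· ≤ ·))

lemma chi_eval {m : ℕ} (g : Finset ℕ → Fin 2) {s t u : Finset ℕ}
    (hs : s ⊆ Finset.range m) (ht : t ⊆ Finset.range m) (hu : u ⊆ Finset.range m)
    (h1 : X s < X t) (h2 : X t < X u) :
    chi m g {pt s, pt t, pt u} = g {dl s t, dl t u} := by
  have l1 : (toLex (pt s) : ℝ ×ₗ ℝ) < toLex (pt t) := Prod.Lex.lt_iff.mpr (Or.inl h1)
  have l2 : (toLex (pt t) : ℝ ×ₗ ℝ) < toLex (pt u) := Prod.Lex.lt_iff.mpr (Or.inl h2)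
  have himg : ({pt s, pt t, pt u} : Finset (ℝ × ℝ)).image (toLex : ℝ × ℝ → ℝ ×ₗ ℝ)
      = {toLex (pt s), toLex (pt t), toLex (pt u)} := by
    simp [Finset.image_insert]
  rw [chi, himg, sorted_triple_list l1 l2]
  show g _ = g _
  rw [ofLex_toLex, ofLex_toLex, ofLex_toLex, inv_pt hs, inv_pt ht, inv_pt hu]

lemma mem_hull_of_between {pj a b u v : ℝ × ℝ} (hab : a.1 < b.1) (huv : u.1 < v.1)
    (hax : a.1 ≤ pj.1) (hxb : pj.1 ≤ b.1) (hux : u.1 ≤ pj.1) (hxv : pj.1 ≤ v.1)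
    (hlow : lineY u v pj.1 ≤ pj.2) (hhigh : pj.2 ≤ lineY a b pj.1) :
    pj ∈ convexHull ℝ ({a, b, u, v} : Set (ℝ × ℝ)) := by
  set A : ℝ × ℝ := (pj.1, lineY a b pj.1) with hA
  set B : ℝ × ℝ := (pj.1, lineY u v pj.1) with hB
  have hAm : A ∈ segment ℝ a b := seg_mem hab hax hxb
  have hBm : B ∈ segment ℝ u v := seg_mem huv hux hxv
  have hAh : A ∈ convexHull ℝ ({a, b, u, v} : Set (ℝ × ℝ)) := by
    apply segment_subset_convexHull (by simp) (by simp) hAm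
  have hBh : B ∈ convexHull ℝ ({a, b, u, v} : Set (ℝ × ℝ)) := by
    apply segment_subset_convexHull (by simp) (by simp) hBm
  have hpj : pj ∈ segment ℝ B A := by
    have : (B.1, pj.2) ∈ segment ℝ B A := vert_mem rfl hlow hhigh
    simpa using this
  exact (convex_convexHull ℝ _).segment_subset hBh hAh hpj

lemma ramsey_lower (m' n : ℕ) (hlt : 2 * Nat.choose m' n < 2 ^ n.choose 2) :
    ∃ g : Finset ℕ → Fin 2, ∀ S ⊆ Finset.range m', S.card = n →
      ∀ col : Fin 2, ∃ e ⊆ S, e.card = 2 ∧ g e ≠ col := by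
  classical
  by_contra hcon
  push_neg at hcon
  -- hcon : ∀ g, ∃ S ⊆ range m', S.card = n ∧ ∃ col, ∀ e ⊆ S, e.card = 2 → g e = col
  set E : Finset (Finset ℕ) := (Finset.range m').powersetCard 2 with hE
  set G : ({e // e ∈ E} → Fin 2) → (Finset ℕ → Fin 2) := fun γ e =>
    if h : e ∈ E then γ ⟨e, h⟩ else 0 with hG
  have spec : ∀ γ : {e // e ∈ E} → Fin 2, ∃ p : Finset ℕ × Fin 2,
      p.1 ⊆ Finset.range m' ∧ p.1.card = n ∧ ∀ e ⊆ p.1, e.card = 2 → G γ e = p.2 := by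
    intro γ
    obtain ⟨S, hS1, hS2, col, hcol⟩ := hcon (G γ)
    exact ⟨(S, col), hS1, hS2, hcol⟩
  set F : ({e // e ∈ E} → Fin 2) → (Finset ℕ × Fin 2) := fun γ => (spec γ).choose with hF
  have Fspec : ∀ γ, (F γ).1 ⊆ Finset.range m' ∧ (F γ).1.card = n ∧
      ∀ e ⊆ (F γ).1, e.card = 2 → G γ e = (F γ).2 := fun γ => (spec γ).choose_spec
  -- n ≤ m'
  have hnm : n ≤ m' := by
    have h := Fspec (fun _ => 0)
    have := Finset.card_le_card h.1
    rwa [h.2.1, Finset.card_range] at this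
  -- fiber bound
  have fiber : ∀ b : Finset ℕ × Fin 2, b.1 ⊆ Finset.range m' → b.1.card = n →
      ((Finset.univ : Finset ({e // e ∈ E} → Fin 2)).filter (fun γ => F γ = b)).card
        ≤ 2 ^ (E.card - n.choose 2) := by
    intro b hb1 hb2
    set ES : Finset (Finset ℕ) := b.1.powersetCard 2 with hES
    have hESsub : ES ⊆ E := by
      intro e he
      rw [hES, Finset.mem_powersetCard] at he
      rw [hE, Finset.mem_powersetCard]
      exact ⟨he.1.trans hb1, he.2⟩
    have hsubset : (Finset.univ.filter (fun γ => F γ = b)) ⊆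
        Fintype.piFinset (fun x : {e // e ∈ E} =>
          if (x : Finset ℕ) ∈ ES then ({b.2} : Finset (Fin 2)) else Finset.univ) := by
      intro γ hγ
      rw [Finset.mem_filter] at hγ
      have hFb := hγ.2
      rw [Fintype.mem_piFinset]
      intro x
      by_cases hx : (x : Finset ℕ) ∈ ES
      · rw [if_pos hx]
        have hx' := Finset.mem_powersetCard.mp (hES ▸ hx)
        have := (Fspec γ).2.2 (x : Finset ℕ) (hFb ▸ hx'.1) hx'.2
        rw [hFb] at this
        have hGx : G γ (x : Finset ℕ) = γ x := by
          rw [hG]; simp only [dif_pos x.2]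
        rw [hGx] at this
        simp [this]
      · rw [if_neg hx]; exact Finset.mem_univ _
    calc ((Finset.univ : Finset ({e // e ∈ E} → Fin 2)).filter (fun γ => F γ = b)).card
        ≤ (Fintype.piFinset (fun x : {e // e ∈ E} =>
            if (x : Finset ℕ) ∈ ES then ({b.2} : Finset (Fin 2)) else Finset.univ)).card :=
          Finset.card_le_card hsubset
      _ = ∏ x : {e // e ∈ E}, (if (x : Finset ℕ) ∈ ES then ({b.2} : Finset (Fin 2)) else Finset.univ).card :=
          Fintype.card_piFinset _
      _ = ∏ x : {e // e ∈ E}, (if (x : Finset ℕ) ∈ ES then 1 else 2) := by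
          apply Finset.prod_congr rfl
          intro x _
          by_cases hx : (x : Finset ℕ) ∈ ES
          · rw [if_pos hx, if_pos hx, Finset.card_singleton]
          · rw [if_neg hx, if_neg hx]; simp
      _ = ∏ e ∈ E, (if e ∈ ES then 1 else 2) := by
          rw [Finset.univ_eq_attach, Finset.prod_attach E (fun e => if e ∈ ES then 1 else 2)]
      _ = 2 ^ (E.card - n.choose 2) := by
          rw [Finset.prod_ite]
          simp only [Finset.prod_const, one_pow, one_mul]
          congr 1
          rw [Finset.filter_not, Finset.card_sdiff_of_subset (Finset.filter_subset _ _)]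
          congr 1
          have : E.filter (fun e => e ∈ ES) = ES := by
            apply Finset.Subset.antisymm
            · intro e he; exact (Finset.mem_filter.mp he).2
            · intro e he; exact Finset.mem_filter.mpr ⟨hESsub he, he⟩
          rw [this, hES, Finset.card_powersetCard, hb2]
  -- total count
  have himg : (Finset.univ : Finset ({e // e ∈ E} → Fin 2)).image F ⊆
      ((Finset.range m').powersetCard n) ×ˢ (Finset.univ : Finset (Fin 2)) := by
    intro b hb
    obtain ⟨γ, _, rfl⟩ := Finset.mem_image.mp hb
    rw [Finset.mem_product]
    exact ⟨Finset.mem_powersetCard.mpr ⟨(Fspec γ).1, (Fspec γ).2.1⟩, Finset.mem_univ _⟩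
  have hcards : (2:ℕ) ^ E.card ≤ 2 ^ (E.card - n.choose 2) * (Nat.choose m' n * 2) := by
    have h1 : (Finset.univ : Finset ({e // e ∈ E} → Fin 2)).card
        ≤ 2 ^ (E.card - n.choose 2) * ((Finset.univ : Finset ({e // e ∈ E} → Fin 2)).image F).card := by
      apply Finset.card_le_mul_card_image
      intro b hb
      obtain ⟨γ, _, rfl⟩ := Finset.mem_image.mp hb
      exact fiber (F γ) (Fspec γ).1 (Fspec γ).2.1
    have h2 : ((Finset.univ : Finset ({e // e ∈ E} → Fin 2)).image F).card
        ≤ Nat.choose m' n * 2 := by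
      calc _ ≤ (((Finset.range m').powersetCard n) ×ˢ (Finset.univ : Finset (Fin 2))).card :=
            Finset.card_le_card himg
        _ = Nat.choose m' n * 2 := by
            rw [Finset.card_product, Finset.card_powersetCard, Finset.card_range]
            simp
    have h3 : (Finset.univ : Finset ({e // e ∈ E} → Fin 2)).card = 2 ^ E.card := by
      rw [Finset.card_univ, Fintype.card_fun, Fintype.card_fin, Fintype.card_coe]
    calc (2:ℕ) ^ E.card = _ := h3.symm
      _ ≤ _ := h1
      _ ≤ 2 ^ (E.card - n.choose 2) * (Nat.choose m' n * 2) := by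
          exact Nat.mul_le_mul_left _ h2
  have hc2le : n.choose 2 ≤ E.card := by
    rw [hE, Finset.card_powersetCard, Finset.card_range]
    exact Nat.choose_le_choose 2 hnm
  have hsplit : (2:ℕ) ^ E.card = 2 ^ (E.card - n.choose 2) * 2 ^ n.choose 2 := by
    rw [← pow_add]
    congr 1
    omega
  rw [hsplit] at hcards
  have hpos : 0 < (2:ℕ) ^ (E.card - n.choose 2) := Nat.pow_pos (by norm_num)
  have := Nat.le_of_mul_le_mul_left hcards hpos
  omega

lemma two_pow_lt_factorial {n : ℕ} (hn : 4 ≤ n) : 2 ^ n < n.factorial := by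
  induction n, hn using Nat.le_induction with
  | base => norm_num [Nat.factorial]
  | succ n hn ih =>
      rw [pow_succ, Nat.factorial_succ]
      calc 2 ^ n * 2 < n.factorial * 2 := by
            exact (Nat.mul_lt_mul_right (by norm_num)).mpr ih
        _ ≤ (n+1) * n.factorial := by
            rw [mul_comm]
            exact Nat.mul_le_mul_right _ (by omega)

lemma exp_ineq {n : ℕ} (hn : 4 ≤ n) : n * (n/2) ≤ n.choose 2 + n/2 := by
  rcases Nat.even_or_odd n with he | ho
  · obtain ⟨q, hq⟩ := he
    have hq2 : n = 2*q := by omega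
    have h1 : n*(n-1) = 2*(q*(n-1)) := by rw [hq2]; ring
    have hch : n.choose 2 = q*(n-1) := by
      rw [Nat.choose_two_right, h1, Nat.mul_div_cancel_left _ (by norm_num : 0 < 2)]
    have hn2 : n/2 = q := by omega
    rw [hch, hn2]
    have h2 : q*(n-1) + q = q*n := by
      calc q*(n-1) + q = q*((n-1)+1) := by ring
        _ = q*n := by congr 1; omega
    rw [h2, mul_comm]
  · obtain ⟨q, hq⟩ := ho
    have h0 : n - 1 = 2*q := by omega
    have hch : n.choose 2 = n*q := by
      rw [Nat.choose_two_right, h0, show n*(2*q) = 2*(n*q) by ring,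
        Nat.mul_div_cancel_left _ (by norm_num : 0 < 2)]
    have hn2 : n/2 = q := by omega
    rw [hch, hn2]
    exact Nat.le_add_right _ _

lemma count_bound {n : ℕ} (hn : 4 ≤ n) :
    2 * Nat.choose (2 ^ (n/2)) n < 2 ^ n.choose 2 := by
  set m' := 2 ^ (n/2) with hm'
  have hd : m'.descFactorial n = n.factorial * m'.choose n :=
    Nat.descFactorial_eq_factorial_mul_choose _ _
  have hdp : m'.descFactorial n ≤ m' ^ n := Nat.descFactorial_le_pow _ _
  have hpow : m' ^ n = 2 ^ (n * (n/2)) := by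
    rw [hm', ← pow_mul, mul_comm]
  have hchain : 2 * m' ^ n < 2 ^ n.choose 2 * n.factorial := by
    have h1 : 2 * m' ^ n = 2 ^ (n * (n/2) + 1) := by
      rw [hpow, pow_succ, mul_comm]
    have h2 : (2:ℕ) ^ (n * (n/2) + 1) ≤ 2 ^ (n.choose 2 + (n/2 + 1)) := by
      apply Nat.pow_le_pow_right (by norm_num)
      have := exp_ineq hn
      omega
    have h3 : (2:ℕ) ^ (n.choose 2 + (n/2 + 1)) = 2 ^ n.choose 2 * 2 ^ (n/2+1) := pow_add _ _ _
    have h4 : (2:ℕ) ^ (n/2+1) ≤ 2 ^ n := Nat.pow_le_pow_right (by norm_num) (by omega)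
    have h5 : (2:ℕ) ^ n < n.factorial := two_pow_lt_factorial hn
    calc 2 * m' ^ n = 2 ^ (n * (n/2) + 1) := h1
      _ ≤ 2 ^ (n.choose 2 + (n/2 + 1)) := h2
      _ = 2 ^ n.choose 2 * 2 ^ (n/2+1) := h3
      _ ≤ 2 ^ n.choose 2 * 2 ^ n := Nat.mul_le_mul_left _ h4
      _ < 2 ^ n.choose 2 * n.factorial := by
          apply Nat.mul_lt_mul_left (Nat.pow_pos (by norm_num)) |>.mpr h5
  have hmain : 2 * m'.choose n * n.factorial < 2 ^ n.choose 2 * n.factorial := by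
    calc 2 * m'.choose n * n.factorial = 2 * (n.factorial * m'.choose n) := by ring
      _ = 2 * m'.descFactorial n := by rw [hd]
      _ ≤ 2 * m' ^ n := by omega
      _ < 2 ^ n.choose 2 * n.factorial := hchain
  exact lt_of_mul_lt_mul_right hmain (Nat.zero_le _)

lemma dl_lt_m {m : ℕ} {s t : Finset ℕ} (hs : s ⊆ Finset.range m) (ht : t ⊆ Finset.range m)
    (hne : s ≠ t) : dl s t < m := by
  have h := dl_mem hne
  rcases Finset.mem_symmDiff.mp h with ⟨h1, _⟩ | ⟨h1, _⟩
  · exact Finset.mem_range.mp (hs h1)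
  · exact Finset.mem_range.mp (ht h1)

lemma ne_of_X_lt {s t : Finset ℕ} (h : X s < X t) : s ≠ t :=
  fun he => by subst he; exact lt_irrefl _ h

lemma card3_pts {a b c : Finset ℕ} (h1 : X a < X b) (h2 : X b < X c) :
    ({pt a, pt b, pt c} : Finset (ℝ × ℝ)).card = 3 := by
  have hab : pt a ≠ pt b := fun h => (ne_of_X_lt h1) (pt_inj h)
  have hac : pt a ≠ pt c := fun h => (ne_of_X_lt (h1.trans h2)) (pt_inj h)
  have hbc : pt b ≠ pt c := fun h => (ne_of_X_lt h2) (pt_inj h)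
  rw [Finset.card_insert_of_notMem (by simp [hab, hac]),
    Finset.card_insert_of_notMem (by simp [hbc]), Finset.card_singleton]

lemma final_contra {m n : ℕ} (g : Finset ℕ → Fin 2)
    (hg : ∀ S ⊆ Finset.range m, S.card = n →
      ∀ col : Fin 2, ∃ e ⊆ S, e.card = 2 ∧ g e ≠ col)
    {T : Finset (ℝ × ℝ)} {col : Fin 2}
    (hcol : ∀ e ⊆ T, e.card = 3 → chi m g e = col)
    {u : ℕ → Finset ℕ} {t : ℕ} (ht : n + 1 ≤ t)
    (hsub : ∀ a, a < t → u a ⊆ Finset.range m)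
    (hX : ∀ a b, a < b → b < t → X (u a) < X (u b))
    (hpts : ∀ a, a < t → pt (u a) ∈ T)
    (hmono : (∀ a, a + 2 < t → dl (u (a+1)) (u (a+2)) < dl (u a) (u (a+1))) ∨
             (∀ a, a + 2 < t → dl (u a) (u (a+1)) < dl (u (a+1)) (u (a+2)))) :
    False := by
  classical
  have hKsub : ∀ a, a + 1 < t → dl (u a) (u (a+1)) < m := fun a ha =>
    dl_lt_m (hsub a (by omega)) (hsub (a+1) ha)
      (ne_of_X_lt (hX a (a+1) (by omega) ha))
  -- the key triple computation
  have claim : ∀ a b, a < b → b + 1 < t →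
      g {dl (u a) (u (a+1)), dl (u b) (u (b+1))} = col := by
    intro a b hab hb
    rcases hmono with hdec | hinc
    · -- use triple (u a, u b, u (b+1))
      have hw : dl (u a) (u b) = dl (u a) (u (a+1)) :=
        window_dec hX hdec a b hab (by omega)
      have h1 : X (u a) < X (u b) := hX a b hab (by omega)
      have h2 : X (u b) < X (u (b+1)) := hX b (b+1) (by omega) hb
      have he : chi m g {pt (u a), pt (u b), pt (u (b+1))}
          = g {dl (u a) (u b), dl (u b) (u (b+1))} :=
        chi_eval g (hsub a (by omega)) (hsub b (by omega)) (hsub (b+1) hb) h1 h2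
      have hsubT : ({pt (u a), pt (u b), pt (u (b+1))} : Finset (ℝ × ℝ)) ⊆ T := by
        intro x hx
        rcases Finset.mem_insert.mp hx with rfl | hx
        · exact hpts a (by omega)
        rcases Finset.mem_insert.mp hx with rfl | hx
        · exact hpts b (by omega)
        rw [Finset.mem_singleton.mp hx]
        exact hpts (b+1) hb
      have := hcol _ hsubT (card3_pts h1 h2)
      rw [he, hw] at this
      exact this
    · -- use triple (u a, u (a+1), u (b+1))
      obtain ⟨d, hd⟩ : ∃ d, b = a + 1 + d := ⟨b - (a+1), by omega⟩
      have hw : dl (u (a+1)) (u (b+1)) = dl (u b) (u (b+1)) := by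
        rcases Nat.eq_zero_or_pos d with rfl | hdpos
        · subst hd; norm_num
        · have := window_inc hX hinc (a+1) d (by omega)
          subst hd
          convert this using 3 <;> omega
      have h1 : X (u a) < X (u (a+1)) := hX a (a+1) (by omega) (by omega)
      have h2 : X (u (a+1)) < X (u (b+1)) := hX (a+1) (b+1) (by omega) hb
      have he : chi m g {pt (u a), pt (u (a+1)), pt (u (b+1))}
          = g {dl (u a) (u (a+1)), dl (u (a+1)) (u (b+1))} :=
        chi_eval g (hsub a (by omega)) (hsub (a+1) (by omega)) (hsub (b+1) hb) h1 h2
      have hsubT : ({pt (u a), pt (u (a+1)), pt (u (b+1))} : Finset (ℝ × ℝ)) ⊆ T := by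
        intro x hx
        rcases Finset.mem_insert.mp hx with rfl | hx
        · exact hpts a (by omega)
        rcases Finset.mem_insert.mp hx with rfl | hx
        · exact hpts (a+1) (by omega)
        rw [Finset.mem_singleton.mp hx]
        exact hpts (b+1) hb
      have := hcol _ hsubT (card3_pts h1 h2)
      rw [he, hw] at this
      exact this
  -- strict monotonicity of the gap sequence gives injectivity
  have hDinj : ∀ a b, a < t - 1 → b < t - 1 → a ≠ b →
      dl (u a) (u (a+1)) ≠ dl (u b) (u (b+1)) := by
    intro a b ha hb hab
    rcases hmono with hdec | hinc
    · rcases Nat.lt_or_ge a b with h | h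
      · exact (D_dec hX hdec a b h (by omega)).ne'
      · exact (D_dec hX hdec b a (by omega) (by omega)).ne
    · rcases Nat.lt_or_ge a b with h | h
      · exact (D_inc hX hinc a b h (by omega)).ne
      · exact (D_inc hX hinc b a (by omega) (by omega)).ne'
  set K : Finset ℕ := (Finset.range (t-1)).image (fun a => dl (u a) (u (a+1))) with hK
  have hKcard : K.card = t - 1 := by
    rw [hK, Finset.card_image_of_injOn, Finset.card_range]
    intro a ha b hb hab
    by_contra hne
    exact hDinj a b (Finset.mem_range.mp ha) (Finset.mem_range.mp hb) hne hab
  have hKrange : K ⊆ Finset.range m := by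
    intro x hx
    obtain ⟨a, ha, rfl⟩ := Finset.mem_image.mp hx
    exact Finset.mem_range.mpr (hKsub a (by have := Finset.mem_range.mp ha; omega))
  obtain ⟨S, hSK, hScard⟩ := Finset.exists_subset_card_eq (show n ≤ K.card by omega)
  obtain ⟨e, heS, hecard, hne⟩ := hg S (hSK.trans hKrange) hScard col
  obtain ⟨x, y, hxy, rfl⟩ := Finset.card_eq_two.mp hecard
  have hxK : x ∈ K := hSK (heS (by simp))
  have hyK : y ∈ K := hSK (heS (by simp))
  obtain ⟨a, ha, hax⟩ := Finset.mem_image.mp hxK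
  obtain ⟨b, hb, hby⟩ := Finset.mem_image.mp hyK
  have hab : a ≠ b := by rintro rfl; rw [← hax, ← hby] at hxy; exact hxy rfl
  rw [Finset.mem_range] at ha hb
  rcases Nat.lt_or_ge a b with h | h
  · apply hne
    rw [← hax, ← hby]
    exact claim a b h (by omega)
  · apply hne
    rw [← hax, ← hby, Finset.pair_comm]
    exact claim b a (by omega) (by omega)

lemma lineY_left (a b : ℝ × ℝ) : lineY a b a.1 = a.2 := by simp [lineY]

lemma lineY_right {a b : ℝ × ℝ} (h : a.1 ≠ b.1) : lineY a b b.1 = b.2 := by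
  rw [lineY, mul_div_assoc, mul_div_cancel₀ _ (sub_ne_zero.mpr (Ne.symm h))]
  ring

lemma slope_to_dl_dec {v w z : Finset ℕ} (h1 : X v < X w) (h2 : X w < X z)
    (hs : slope (pt w) (pt z) < slope (pt v) (pt w)) : dl w z < dl v w := by
  rcases lt_trichotomy (dl w z) (dl v w) with h | h | h
  · exact h
  · exact absurd h.symm (dl_ne_middle h1 h2)
  · exfalso
    have := slope_lt_of_dl_lt (ne_of_X_lt h1) (ne_of_X_lt h2) h1 h2 h
    linarith

lemma slope_to_dl_inc {v w z : Finset ℕ} (h1 : X v < X w) (h2 : X w < X z)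
    (hs : slope (pt v) (pt w) < slope (pt w) (pt z)) : dl v w < dl w z := by
  rcases lt_trichotomy (dl v w) (dl w z) with h | h | h
  · exact h
  · exact absurd h (dl_ne_middle h1 h2)
  · exfalso
    have := slope_lt_of_dl_lt (ne_of_X_lt h2) (ne_of_X_lt h1) h2 h1 h
    linarith

lemma assemble {m n t₀ : ℕ} (g : Finset ℕ → Fin 2)
    (hg : ∀ S ⊆ Finset.range m, S.card = n →
      ∀ col : Fin 2, ∃ e ⊆ S, e.card = 2 ∧ g e ≠ col)
    {T : Finset (ℝ × ℝ)} {col : Fin 2}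
    (hcol : ∀ e ⊆ T, e.card = 3 → chi m g e = col)
    {s : ℕ → Finset ℕ}
    (hsub : ∀ i, i < t₀ → s i ⊆ Finset.range m)
    (hXm : ∀ i j, i < j → j < t₀ → X (s i) < X (s j))
    (hpT : ∀ i, i < t₀ → pt (s i) ∈ T)
    (W : Finset ℕ) (hWsub : W ⊆ Finset.range t₀) (hWcard : n + 1 ≤ W.card)
    (hslope : (∀ i j k, i ∈ W → j ∈ W → k ∈ W → i < j → j < k →
        slope (pt (s j)) (pt (s k)) < slope (pt (s i)) (pt (s j))) ∨
      (∀ i j k, i ∈ W → j ∈ W → k ∈ W → i < j → j < k →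
        slope (pt (s i)) (pt (s j)) < slope (pt (s j)) (pt (s k)))) : False := by
  classical
  set t := W.card with hts
  set σ : ℕ → ℕ := fun a => if h : a < t then W.orderEmbOfFin rfl ⟨a, h⟩ else 0 with hσ
  have hσmem : ∀ a, a < t → σ a ∈ W := by
    intro a ha
    rw [hσ]; simp only [dif_pos ha]
    exact Finset.orderEmbOfFin_mem _ _ _
  have hσlt : ∀ a, a < t → σ a < t₀ := fun a ha => Finset.mem_range.mp (hWsub (hσmem a ha))
  have hσmono : ∀ a b, a < b → b < t → σ a < σ b := by
    intro a b hab hb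
    rw [hσ]; simp only [dif_pos (hab.trans hb), dif_pos hb]
    exact (W.orderEmbOfFin rfl).strictMono (by exact Fin.mk_lt_mk.mpr hab)
  set u : ℕ → Finset ℕ := fun a => s (σ a) with hu
  have hX' : ∀ a b, a < b → b < t → X (u a) < X (u b) := fun a b hab hb =>
    hXm (σ a) (σ b) (hσmono a b hab hb) (hσlt b hb)
  have hsub' : ∀ a, a < t → u a ⊆ Finset.range m := fun a ha => hsub (σ a) (hσlt a ha)
  have hpts' : ∀ a, a < t → pt (u a) ∈ T := fun a ha => hpT (σ a) (hσlt a ha)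
  apply final_contra g hg hcol (show n + 1 ≤ t from hWcard) hsub' hX' hpts'
  rcases hslope with hdec | hinc
  · left
    intro a ha
    have h1 : X (u a) < X (u (a+1)) := hX' a (a+1) (by omega) (by omega)
    have h2 : X (u (a+1)) < X (u (a+2)) := hX' (a+1) (a+2) (by omega) ha
    apply slope_to_dl_dec h1 h2
    exact hdec (σ a) (σ (a+1)) (σ (a+2)) (hσmem a (by omega)) (hσmem (a+1) (by omega))
      (hσmem (a+2) ha) (hσmono a (a+1) (by omega) (by omega))
      (hσmono (a+1) (a+2) (by omega) ha)
  · right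
    intro a ha
    have h1 : X (u a) < X (u (a+1)) := hX' a (a+1) (by omega) (by omega)
    have h2 : X (u (a+1)) < X (u (a+2)) := hX' (a+1) (a+2) (by omega) ha
    apply slope_to_dl_inc h1 h2
    exact hinc (σ a) (σ (a+1)) (σ (a+2)) (hσmem a (by omega)) (hσmem (a+1) (by omega))
      (hσmem (a+2) ha) (hσmono a (a+1) (by omega) (by omega))
      (hσmono (a+1) (a+2) (by omega) ha)

set_option maxHeartbeats 2000000 in
lemma construction {n : ℕ} (hn : 4 ≤ n) :
    ∃ P : Finset (ℝ × ℝ), P.card = 2 ^ 2 ^ (n / 2) ∧ GenPos P ∧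
      ∃ χ : Finset (ℝ × ℝ) → Fin 2,
        ¬ ∃ T ⊆ P, T.card = 2 * n ∧ ConvexPos T ∧
          ∃ col : Fin 2, ∀ e ⊆ T, e.card = 3 → χ e = col := by
  classical
  set m := 2 ^ (n / 2) with hm
  obtain ⟨g, hg⟩ := ramsey_lower m n (count_bound hn)
  refine ⟨Pset m, card_Pset m, genPos_Pset m, chi m g, ?_⟩
  rintro ⟨T, hTP, hTcard, hTconv, col, hcol⟩
  set t₀ := 2 * n with ht₀
  have ht₀4 : 8 ≤ t₀ := by omega
  -- sorted enumeration of T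
  have hTL : (T.image (toLex : ℝ × ℝ → ℝ ×ₗ ℝ)).card = t₀ := by
    rw [Finset.card_image_of_injective _ toLex.injective, hTcard]
  set emb := (T.image (toLex : ℝ × ℝ → ℝ ×ₗ ℝ)).orderEmbOfFin hTL with hemb
  set p : ℕ → ℝ × ℝ := fun i => if h : i < t₀ then ofLex (emb ⟨i, h⟩) else 0 with hp
  have hpT : ∀ i, i < t₀ → p i ∈ T := by
    intro i hi
    rw [hp]; simp only [dif_pos hi]
    have := Finset.orderEmbOfFin_mem _ hTL ⟨i, hi⟩
    obtain ⟨a, haT, ha⟩ := Finset.mem_image.mp this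
    have : ofLex (emb ⟨i, hi⟩) = a := by rw [← ha]; rfl
    rwa [this]
  set s : ℕ → Finset ℕ := fun i => inv m (p i) with hsdef
  have hs : ∀ i, i < t₀ → s i ⊆ Finset.range m ∧ pt (s i) = p i := by
    intro i hi
    apply inv_spec
    obtain ⟨w, hw1, hw2⟩ := mem_Pset.mp (hTP (hpT i hi))
    exact ⟨w, hw1, hw2⟩
  have hsub : ∀ i, i < t₀ → s i ⊆ Finset.range m := fun i hi => (hs i hi).1
  have hpt_mem : ∀ i, i < t₀ → pt (s i) ∈ T := by
    intro i hi; rw [(hs i hi).2]; exact hpT i hi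
  have hXm : ∀ i j, i < j → j < t₀ → X (s i) < X (s j) := by
    intro i j hij hj
    have hi : i < t₀ := hij.trans hj
    have hlt : emb ⟨i, hi⟩ < emb ⟨j, hj⟩ := by
      apply (emb.lt_iff_lt).mpr
      exact Fin.mk_lt_mk.mpr hij
    have hpi : pt (s i) = p i := (hs i hi).2
    have hpj : pt (s j) = p j := (hs j hj).2
    have hplex : p i = ofLex (emb ⟨i, hi⟩) := by rw [hp]; simp only [dif_pos hi]
    have hplex' : p j = ofLex (emb ⟨j, hj⟩) := by rw [hp]; simp only [dif_pos hj]
    rcases Prod.Lex.lt_iff.mp (show (toLex (p i) : ℝ ×ₗ ℝ) < toLex (p j) by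
      rw [hplex, hplex']; simpa using hlt) with h | ⟨h, _⟩
    · have e1 : (p i).1 = X (s i) := by rw [← hpi]; rfl
      have e2 : (p j).1 = X (s j) := by rw [← hpj]; rfl
      rw [ofLex_toLex, ofLex_toLex] at h
      rwa [e1, e2] at h
    · exfalso
      have e1 : (p i).1 = X (s i) := by rw [← hpi]; rfl
      have e2 : (p j).1 = X (s j) := by rw [← hpj]; rfl
      rw [ofLex_toLex, ofLex_toLex] at h
      rw [e1, e2] at h
      have : s i = s j := X_injOn h
      have : p i = p j := by rw [← hpi, ← hpj, this]
      have : emb ⟨i, hi⟩ = emb ⟨j, hj⟩ := by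
        rw [hplex, hplex'] at this
        exact toLex.injective (by simpa using congrArg toLex this)
      rw [this] at hlt
      exact lt_irrefl _ hlt
  -- general position within T
  have hGT : ∀ T' ⊆ T, T'.card = 3 → ¬ Collinear ℝ (T' : Set (ℝ × ℝ)) :=
    fun T' h hc => genPos_Pset m T' (h.trans hTP) hc
  -- the two chords
  set a0 := pt (s 0) with ha0
  set a1 := pt (s (t₀ - 1)) with ha1
  have hx01 : a0.1 < a1.1 := hXm 0 (t₀-1) (by omega) (by omega)
  -- upper and lower sets
  set U : Finset ℕ := (Finset.range t₀).filter
    (fun i => lineY a0 a1 (X (s i)) ≤ Y (s i)) with hU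
  set Lo : Finset ℕ := (Finset.range t₀).filter
    (fun i => Y (s i) ≤ lineY a0 a1 (X (s i))) with hLo
  have hunion : U ∪ Lo = Finset.range t₀ := by
    apply Finset.Subset.antisymm
    · intro i hi
      rcases Finset.mem_union.mp hi with h | h
      · exact Finset.mem_filter.mp h |>.1
      · exact Finset.mem_filter.mp h |>.1
    · intro i hi
      rcases le_total (lineY a0 a1 (X (s i))) (Y (s i)) with h | h
      · exact Finset.mem_union_left _ (Finset.mem_filter.mpr ⟨hi, h⟩)
      · exact Finset.mem_union_right _ (Finset.mem_filter.mpr ⟨hi, h⟩)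
  have hinter : ({0, t₀ - 1} : Finset ℕ) ⊆ U ∩ Lo := by
    intro i hi
    have h0 : lineY a0 a1 (X (s 0)) = Y (s 0) := lineY_left a0 a1
    have h1 : lineY a0 a1 (X (s (t₀-1))) = Y (s (t₀-1)) := lineY_right hx01.ne
    rcases Finset.mem_insert.mp hi with rfl | hi
    · exact Finset.mem_inter.mpr ⟨Finset.mem_filter.mpr ⟨Finset.mem_range.mpr (by omega), h0.le⟩,
        Finset.mem_filter.mpr ⟨Finset.mem_range.mpr (by omega), h0.ge⟩⟩
    · rw [Finset.mem_singleton.mp hi]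
      exact Finset.mem_inter.mpr ⟨Finset.mem_filter.mpr ⟨Finset.mem_range.mpr (by omega), h1.le⟩,
        Finset.mem_filter.mpr ⟨Finset.mem_range.mpr (by omega), h1.ge⟩⟩
  have hcardsum : t₀ + 2 ≤ U.card + Lo.card := by
    have h1 := Finset.card_union_add_card_inter U Lo
    rw [hunion, Finset.card_range] at h1
    have h2 : 2 ≤ (U ∩ Lo).card := by
      have : ({0, t₀ - 1} : Finset ℕ).card = 2 := by
        rw [Finset.card_insert_of_notMem (by simp; omega), Finset.card_singleton]
      rw [← this]
      exact Finset.card_le_card hinter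
    omega
  -- common hull-membership contradiction machine
  have hullcontra : ∀ i j k, i < j → j < k → k < t₀ →
      lineY a0 a1 (X (s j)) ≤ Y (s j) → Y (s j) ≤ lineY (pt (s i)) (pt (s k)) (X (s j)) →
      False := by
    intro i j k hij hjk hk hlow hhigh
    have hi : i < t₀ := by omega
    have hj : j < t₀ := by omega
    have hxik : X (s i) < X (s k) := hXm i k (hij.trans hjk) hk
    have hxij : X (s i) < X (s j) := hXm i j hij hj
    have hxjk : X (s j) < X (s k) := hXm j k hjk hk
    have hx0j : a0.1 ≤ X (s j) := (hXm 0 j (by omega) hj).le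
    have hxjl : X (s j) ≤ a1.1 := (hXm j (t₀-1) (by omega) (by omega)).le
    have hhull : pt (s j) ∈ convexHull ℝ ({pt (s i), pt (s k), a0, a1} : Set (ℝ × ℝ)) :=
      mem_hull_of_between hxik hx01 hxij.le hxjk.le hx0j hxjl hlow hhigh
    have hsubE : ({pt (s i), pt (s k), a0, a1} : Set (ℝ × ℝ)) ⊆
        ((T.erase (pt (s j)) : Finset (ℝ × ℝ)) : Set (ℝ × ℝ)) := by
      intro x hx
      simp only [Set.mem_insert_iff, Set.mem_singleton_iff] at hx
      rcases hx with rfl | rfl | rfl | rfl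
      · exact Finset.mem_coe.mpr (Finset.mem_erase.mpr
          ⟨fun h => (ne_of_X_lt hxij) (pt_inj h), hpt_mem i hi⟩)
      · exact Finset.mem_coe.mpr (Finset.mem_erase.mpr
          ⟨fun h => (ne_of_X_lt hxjk) (pt_inj h).symm, hpt_mem k hk⟩)
      · exact Finset.mem_coe.mpr (Finset.mem_erase.mpr
          ⟨fun h => (ne_of_X_lt (hXm 0 j (by omega) hj)) (pt_inj h), hpt_mem 0 (by omega)⟩)
      · exact Finset.mem_coe.mpr (Finset.mem_erase.mpr
          ⟨fun h => (ne_of_X_lt (hXm j (t₀-1) (by omega) (by omega))) (pt_inj h).symm,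
            hpt_mem (t₀-1) (by omega)⟩)
    exact hTconv (pt (s j)) (hpt_mem j hj) (convexHull_mono hsubE hhull)
  have hnc3 : ∀ i j k, i < j → j < k → k < t₀ →
      ¬ Collinear ℝ ({pt (s i), pt (s j), pt (s k)} : Set (ℝ × ℝ)) := by
    intro i j k hij hjk hk hcolin
    have hj : j < t₀ := by omega
    have hi : i < t₀ := by omega
    have hsub3 : ({pt (s i), pt (s j), pt (s k)} : Finset (ℝ × ℝ)) ⊆ T := by
      intro x hx
      rcases Finset.mem_insert.mp hx with rfl | hx
      · exact hpt_mem i hi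
      rcases Finset.mem_insert.mp hx with rfl | hx
      · exact hpt_mem j hj
      rw [Finset.mem_singleton.mp hx]
      exact hpt_mem k hk
    have := hGT _ hsub3 (card3_pts (hXm i j hij hj) (hXm j k hjk hk))
    apply this
    convert hcolin using 1
    simp
  -- cap property for U
  have hcap : ∀ i j k, i ∈ U → j ∈ U → k ∈ U → i < j → j < k →
      slope (pt (s j)) (pt (s k)) < slope (pt (s i)) (pt (s j)) := by
    intro i j k hiU hjU hkU hij hjk
    have hk : k < t₀ := Finset.mem_range.mp (Finset.mem_filter.mp hkU).1
    have hj : j < t₀ := by omega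
    have hxij : (pt (s i)).1 < (pt (s j)).1 := hXm i j hij hj
    have hxjk : (pt (s j)).1 < (pt (s k)).1 := hXm j k hjk hk
    by_contra hle
    rcases eq_or_lt_of_le (not_lt.mp hle) with heq | hlt
    · -- collinear
      have hon := (slope_eq_iff_on hxij hxjk).mp heq
      exact hnc3 i j k hij hjk hk (collinear_of_lineY (hxij.trans hxjk) hon)
    · have hbelow := (slope_lt_iff_below hxij hxjk).mp hlt
      exact hullcontra i j k hij hjk hk (Finset.mem_filter.mp hjU).2 hbelow.le
  -- cup property for Lo
  have hcup : ∀ i j k, i ∈ Lo → j ∈ Lo → k ∈ Lo → i < j → j < k →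
      slope (pt (s i)) (pt (s j)) < slope (pt (s j)) (pt (s k)) := by
    intro i j k hiL hjL hkL hij hjk
    have hk : k < t₀ := Finset.mem_range.mp (Finset.mem_filter.mp hkL).1
    have hj : j < t₀ := by omega
    have hxij : (pt (s i)).1 < (pt (s j)).1 := hXm i j hij hj
    have hxjk : (pt (s j)).1 < (pt (s k)).1 := hXm j k hjk hk
    by_contra hle
    rcases eq_or_lt_of_le (not_lt.mp hle) with heq | hlt
    · have hon := (slope_eq_iff_on hxij hxjk).mp heq.symm
      exact hnc3 i j k hij hjk hk (collinear_of_lineY (hxij.trans hxjk) hon)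
    · have habove := (slope_gt_iff_above hxij hxjk).mp hlt
      -- p j above chord ik, below main chord : swap roles
      have hj' : j < t₀ := hj
      have hi : i < t₀ := by omega
      have hxik : X (s i) < X (s k) := hXm i k (hij.trans hjk) hk
      have hx0j : a0.1 ≤ X (s j) := (hXm 0 j (by omega) hj).le
      have hxjl : X (s j) ≤ a1.1 := (hXm j (t₀-1) (by omega) (by omega)).le
      have hhull : pt (s j) ∈ convexHull ℝ ({a0, a1, pt (s i), pt (s k)} : Set (ℝ × ℝ)) :=
        mem_hull_of_between hx01 hxik hx0j hxjl hxij.le hxjk.le habove.le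
          (Finset.mem_filter.mp hjL).2
      have hsubE : ({a0, a1, pt (s i), pt (s k)} : Set (ℝ × ℝ)) ⊆
          ((T.erase (pt (s j)) : Finset (ℝ × ℝ)) : Set (ℝ × ℝ)) := by
        intro x hx
        simp only [Set.mem_insert_iff, Set.mem_singleton_iff] at hx
        rcases hx with rfl | rfl | rfl | rfl
        · exact Finset.mem_coe.mpr (Finset.mem_erase.mpr
            ⟨fun h => (ne_of_X_lt (hXm 0 j (by omega) hj)) (pt_inj h), hpt_mem 0 (by omega)⟩)
        · exact Finset.mem_coe.mpr (Finset.mem_erase.mpr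
            ⟨fun h => (ne_of_X_lt (hXm j (t₀-1) (by omega) (by omega))) (pt_inj h).symm,
              hpt_mem (t₀-1) (by omega)⟩)
        · exact Finset.mem_coe.mpr (Finset.mem_erase.mpr
            ⟨fun h => (ne_of_X_lt hxij) (pt_inj h), hpt_mem i hi⟩)
        · exact Finset.mem_coe.mpr (Finset.mem_erase.mpr
            ⟨fun h => (ne_of_X_lt hxjk) (pt_inj h).symm, hpt_mem k hk⟩)
      exact hTconv (pt (s j)) (hpt_mem j hj) (convexHull_mono hsubE hhull)
  -- pick the bigger side
  rcases Nat.lt_or_ge U.card (n+1) with hUsmall | hUbig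
  · -- then Lo is big
    have hLobig : n + 1 ≤ Lo.card := by omega
    exact assemble g hg hcol hsub hXm hpt_mem Lo (Finset.filter_subset _ _) hLobig
      (Or.inr hcup)
  · exact assemble g hg hcol hsub hXm hpt_mem U (Finset.filter_subset _ _) hUbig
      (Or.inl hcap)

lemma convexPos_subset {T T' : Finset (ℝ × ℝ)} (h : ConvexPos T) (hsub : T' ⊆ T) :
    ConvexPos T' := by
  intro p hp hmem
  apply h p (hsub hp)
  apply convexHull_mono _ hmem
  exact_mod_cast Finset.coe_subset.mpr (Finset.erase_subset_erase p hsub)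

end SU

theorem stepping_up_lower_bound' :
    ∃ (n₀ : ℕ) (c : ℝ), 0 < c ∧ ∀ n : ℕ, n₀ ≤ n →
      (∃ P : Finset (ℝ × ℝ), P.card = 2 ^ 2 ^ (n / 2) ∧ GenPos P ∧
        ∃ χ : Finset (ℝ × ℝ) → Fin 2,
          ¬ ∃ T ⊆ P, T.card = 2 * n ∧ ConvexPos T ∧
            ∃ col : Fin 2, ∀ e ⊆ T, e.card = 3 → χ e = col) ∧
      (∀ N : ℕ, GeomRamseyProp3 n 2 N → (2 : ℝ) ^ (2 : ℝ) ^ (c * n) ≤ (N : ℝ)) := by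
  refine ⟨8, 1/8, by norm_num, ?_⟩
  intro n hn
  constructor
  · exact SU.construction (by omega)
  · intro N hN
    have hn' : 4 ≤ n / 2 := by omega
    obtain ⟨P, hPcard, hPgen, χ, hχ⟩ := SU.construction hn'
    have hNP : P.card < N := by
      by_contra hle
      push_neg at hle
      obtain ⟨T, hTP, hTcard, hTconv, c, hc⟩ := hN P hle hPgen χ
      obtain ⟨T', hT'sub, hT'card⟩ := Finset.exists_subset_card_eq
        (show 2 * (n / 2) ≤ T.card by rw [hTcard]; omega)
      exact hχ ⟨T', hT'sub.trans hTP, hT'card, SU.convexPos_subset hTconv hT'sub, c,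
        fun e he h3 => hc e (he.trans hT'sub) h3⟩
    have h44 : n / 2 / 2 = n / 4 := by
      rw [Nat.div_div_eq_div_mul]
    rw [h44] at hPcard
    have hA : (1/8 : ℝ) * n ≤ ((n / 4 : ℕ) : ℝ) := by
      have hd := Nat.div_add_mod n 4
      have hm : n % 4 < 4 := Nat.mod_lt _ (by norm_num)
      have : ((n : ℝ)) = 4 * ((n / 4 : ℕ) : ℝ) + ((n % 4 : ℕ) : ℝ) := by
        exact_mod_cast hd.symm
      have hm' : ((n % 4 : ℕ) : ℝ) ≤ 3 := by exact_mod_cast Nat.lt_succ_iff.mp hm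
      have hn8 : (8 : ℝ) ≤ n := by exact_mod_cast hn
      linarith
    have hB : (2 : ℝ) ^ ((1/8 : ℝ) * n) ≤ (2 : ℝ) ^ (((n / 4 : ℕ) : ℝ)) :=
      Real.rpow_le_rpow_of_exponent_le one_le_two hA
    have hC : (2 : ℝ) ^ (((n / 4 : ℕ) : ℝ)) = ((2 ^ (n / 4) : ℕ) : ℝ) := by
      rw [Real.rpow_natCast]
      push_cast
      ring
    have hD : (2 : ℝ) ^ ((2 : ℝ) ^ ((1/8 : ℝ) * n)) ≤ (2 : ℝ) ^ (((2 ^ (n / 4) : ℕ) : ℝ)) := by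
      apply Real.rpow_le_rpow_of_exponent_le one_le_two
      rw [← hC]
      exact hB
    have hE : (2 : ℝ) ^ (((2 ^ (n / 4) : ℕ) : ℝ)) = ((2 ^ 2 ^ (n / 4) : ℕ) : ℝ) := by
      rw [Real.rpow_natCast]
      push_cast
      ring
    have hF : ((2 ^ 2 ^ (n / 4) : ℕ) : ℝ) ≤ (N : ℝ) := by
      have : (2 : ℕ) ^ 2 ^ (n / 4) ≤ N := by
        rw [← hPcard]; exact hNP.le
      exact_mod_cast this
    calc (2 : ℝ) ^ ((2 : ℝ) ^ ((1/8 : ℝ) * n)) ≤ (2 : ℝ) ^ (((2 ^ (n / 4) : ℕ) : ℝ)) := hD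
      _ = ((2 ^ 2 ^ (n / 4) : ℕ) : ℝ) := hE
      _ ≤ (N : ℝ) := hF


/-- For sufficiently large `n`, there is a set of `2^(2^⌊n/2⌋)` points in general position
in the plane and a 2-coloring of its triples with no `2n` points in convex position whose
triples are monochromatic.  Consequently `g(K³_n, K³_n) ≥ 2^(2^(c n))` for an absolute
constant `c > 0`. -/
theorem stepping_up_lower_bound :
    ∃ (n₀ : ℕ) (c : ℝ), 0 < c ∧ ∀ n : ℕ, n₀ ≤ n →
      (∃ P : Finset (ℝ × ℝ), P.card = 2 ^ 2 ^ (n / 2) ∧ GenPos P ∧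
        ∃ χ : Finset (ℝ × ℝ) → Fin 2,
          ¬ ∃ T ⊆ P, T.card = 2 * n ∧ ConvexPos T ∧
            ∃ col : Fin 2, ∀ e ⊆ T, e.card = 3 → χ e = col) ∧
      (∀ N : ℕ, GeomRamseyProp3 n 2 N → (2 : ℝ) ^ (2 : ℝ) ^ (c * n) ≤ (N : ℝ)) := by
  exact stepping_up_lower_bound'
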